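/- Fix integers r ≥ 2, t ≥ 1, n ≥ 1, and for 0 ≤ i ≤ n let 𝓖_i be the family of all i-element subsets F of [n] such that there exists an integer j ≥ 0 with |F ∩ [t + r·j]| ≥ t + (r−1)·j. Then for every 0 ≤ i < n, |𝓖_i| / C(n,i) ≤ |𝓖_{i+1}| / C(n,i+1). -/

import Mathlib

/-- `hitFamily m i r t` is the family of all `i`-element subsets `F` of `[m]` such that
there exists `j ≥ 0` with `|F ∩ [t + r·j]| ≥ t + (r−1)·j`; in lattice-path terms,
it corresponds to the lattice paths from `(0,0)` to `(m−i,i)` hitting `y = (r−1)x + t`. -/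
noncomputable def hitFamily (m i r t : ℕ) : Finset (Finset ℕ) := by
  classical
  exact (Finset.powersetCard i (Finset.Icc 1 m)).filter
    (fun F => ∃ j : ℕ, t + (r - 1) * j ≤ (F ∩ Finset.Icc 1 (t + r * j)).card)

lemma hitFamily_mem {m i r t : ℕ} {F : Finset ℕ} :
    F ∈ hitFamily m i r t ↔ (F ⊆ Finset.Icc 1 m ∧ F.card = i) ∧
      ∃ j : ℕ, t + (r - 1) * j ≤ (F ∩ Finset.Icc 1 (t + r * j)).card := by
  simp [hitFamily, Finset.mem_powersetCard]

lemma hitFamily_key (n i r t : ℕ) (hi : i < n) :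
    (hitFamily n i r t).card * (n - i) ≤ (hitFamily n (i + 1) r t).card * (i + 1) := by
  classical
  apply Finset.card_mul_le_card_mul (fun F G => F ⊆ G)
  · intro F hF
    rw [hitFamily_mem] at hF
    obtain ⟨⟨hFs, hFc⟩, j, hj⟩ := hF
    have hcard : (Finset.Icc 1 n \ F).card = n - i := by
      rw [Finset.card_sdiff_of_subset hFs, Nat.card_Icc, hFc]; omega
    rw [← hcard]
    apply Finset.card_le_card_of_injOn (fun x => insert x F)
    · intro x hx
      simp only [Finset.mem_sdiff, Finset.mem_coe] at hx
      rw [Finset.mem_coe, Finset.bipartiteAbove, Finset.mem_filter, hitFamily_mem]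
      refine ⟨⟨⟨Finset.insert_subset hx.1 hFs, by
        rw [Finset.card_insert_of_notMem hx.2, hFc]⟩, j, hj.trans ?_⟩,
        Finset.subset_insert _ _⟩
      exact Finset.card_le_card
        (Finset.inter_subset_inter (Finset.subset_insert _ _) le_rfl)
    · intro x hx y hy hxy
      simp only [Finset.mem_sdiff, Finset.mem_coe] at hx hy
      have : x ∈ insert y F := by simp only [] at hxy; rw [← hxy]; exact Finset.mem_insert_self x F
      rcases Finset.mem_insert.1 this with h | h
      · exact h
      · exact absurd h hx.2
  · intro G hG
    rw [hitFamily_mem] at hG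
    calc ((hitFamily n i r t).bipartiteBelow (fun F G => F ⊆ G) G).card
        ≤ (Finset.powersetCard i G).card := by
          apply Finset.card_le_card
          intro F hF
          rw [Finset.bipartiteBelow, Finset.mem_filter, hitFamily_mem] at hF
          exact Finset.mem_powersetCard.2 ⟨hF.2, hF.1.1.2⟩
      _ = (i + 1).choose i := by rw [Finset.card_powersetCard, hG.1.2]
      _ = i + 1 := Nat.choose_succ_self_right i

theorem hitFamily_ratio_mono_in_size
    (n r t : ℕ) (hr : 2 ≤ r) (ht : 1 ≤ t) (hn : 1 ≤ n) :
    ∀ i < n, ((hitFamily n i r t).card : ℝ) / (Nat.choose n i) ≤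
      ((hitFamily n (i + 1) r t).card : ℝ) / (Nat.choose n (i + 1)) := by
  intro i hi
  have h1 : (0 : ℝ) < (n.choose i : ℝ) := by
    exact_mod_cast Nat.choose_pos hi.le
  have h2 : (0 : ℝ) < (n.choose (i + 1) : ℝ) := by
    exact_mod_cast Nat.choose_pos hi
  rw [div_le_div_iff₀ h1 h2]
  have key := hitFamily_key n i r t hi
  have hnat : (hitFamily n i r t).card * n.choose (i + 1) ≤
      (hitFamily n (i + 1) r t).card * n.choose i := by
    apply Nat.le_of_mul_le_mul_right _ (Nat.succ_pos i)
    calc (hitFamily n i r t).card * n.choose (i + 1) * (i + 1)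
        = (hitFamily n i r t).card * (n.choose (i + 1) * (i + 1)) := by ring
      _ = (hitFamily n i r t).card * (n.choose i * (n - i)) := by
          rw [Nat.choose_succ_right_eq]
      _ = (hitFamily n i r t).card * (n - i) * n.choose i := by ring
      _ ≤ (hitFamily n (i + 1) r t).card * (i + 1) * n.choose i :=
          Nat.mul_le_mul_right _ key
      _ = (hitFamily n (i + 1) r t).card * n.choose i * (i + 1) := by ring
  exact_mod_cast hnat
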